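/- Let g : X → ℝ be convex, differentiable, and nonnegative, and let h : X → ℝ be concave, differentiable, and strictly positive on an open convex set X ⊆ ℝⁿ. Then f = g/h is invex with kernel η(x,y) = (h(x)/h(y))·(y - x); that is, f(y) - f(x) ≥ ⟨∇f(x), η(x,y)⟩ for all x, y ∈ X. -/

import Mathlib

open RealInnerProductSpace

lemma inner_gradient_eq {n : ℕ} (f : EuclideanSpace ℝ (Fin n) → ℝ)
    (x v : EuclideanSpace ℝ (Fin n)) :
    ⟪gradient f x, v⟫ = fderiv ℝ f x v := by
  rw [gradient, InnerProductSpace.toDual_symm_apply]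

/-- First-order condition for convex functions. -/
lemma convexOn_first_order {n : ℕ} {s : Set (EuclideanSpace ℝ (Fin n))}
    {f : EuclideanSpace ℝ (Fin n) → ℝ} (hf : ConvexOn ℝ s f)
    {x y : EuclideanSpace ℝ (Fin n)} (hx : x ∈ s) (hy : y ∈ s)
    (hd : DifferentiableAt ℝ f x) :
    f x + fderiv ℝ f x (y - x) ≤ f y := by
  set φ : ℝ → ℝ := fun t => f (x + t • (y - x)) with hφ
  have hline : HasDerivAt (fun t : ℝ => x + t • (y - x)) (y - x) 0 := by
    simpa using ((hasDerivAt_id (0:ℝ)).smul_const (y - x)).const_add x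
  have h0 : x + (0:ℝ) • (y - x) = x := by simp
  have hcomp : HasDerivAt φ (fderiv ℝ f x (y - x)) 0 := by
    have hd' : HasFDerivAt f (fderiv ℝ f x) (x + (0:ℝ) • (y - x)) := by
      rw [h0]; exact hd.hasFDerivAt
    exact hd'.comp_hasDerivAt 0 hline
  have hslope : Filter.Tendsto (fun t : ℝ => (φ t - φ 0) / t) (nhdsWithin 0 (Set.Ioi 0))
      (nhds (fderiv ℝ f x (y - x))) := by
    have h1 := hasDerivAt_iff_tendsto_slope.mp hcomp
    have h2 : nhdsWithin (0:ℝ) (Set.Ioi 0) ≤ nhdsWithin 0 {(0:ℝ)}ᶜ :=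
      nhdsWithin_mono _ (fun t ht => ne_of_gt ht)
    have := h1.mono_left h2
    refine this.congr' ?_
    filter_upwards [self_mem_nhdsWithin] with t ht
    simp [slope, div_eq_inv_mul]
  have hbound : ∀ᶠ t in nhdsWithin (0:ℝ) (Set.Ioi 0), (φ t - φ 0) / t ≤ f y - f x := by
    have hmem : Set.Ioc (0:ℝ) 1 ∈ nhdsWithin (0:ℝ) (Set.Ioi 0) :=
      Ioc_mem_nhdsGT_of_mem ⟨le_refl 0, one_pos⟩
    filter_upwards [hmem] with t ht
    have ht0 : 0 < t := ht.1
    have ht1 : t ≤ 1 := ht.2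
    have hcvx : φ t ≤ (1 - t) * f x + t * f y := by
      have heq : x + t • (y - x) = (1 - t) • x + t • y := by module
      have h2 := hf.2 hx hy (by linarith : (0:ℝ) ≤ 1 - t) ht0.le (by ring)
      rw [smul_eq_mul, smul_eq_mul] at h2
      show f (x + t • (y - x)) ≤ (1 - t) * f x + t * f y
      rw [heq]; exact h2
    have hφ0 : φ 0 = f x := by simp [hφ]
    rw [div_le_iff₀ ht0, hφ0]
    nlinarith
  have := le_of_tendsto hslope hbound
  linarith

/-- Fractional programming: `f = g/h` with `g` convex nonnegative and `h` concave positive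
is invex with kernel `η(x,y) = (h(x)/h(y))·(y-x)`. -/
theorem invex_fractional {n : ℕ}
    (X : Set (EuclideanSpace ℝ (Fin n))) (hX : IsOpen X) (hXc : Convex ℝ X) (hXne : X.Nonempty)
    (g h : EuclideanSpace ℝ (Fin n) → ℝ)
    (hgconv : ConvexOn ℝ X g) (hgdiff : ∀ x ∈ X, DifferentiableAt ℝ g x)
    (hgnonneg : ∀ x ∈ X, 0 ≤ g x)
    (hhconc : ConcaveOn ℝ X h) (hhdiff : ∀ x ∈ X, DifferentiableAt ℝ h x)
    (hhpos : ∀ x ∈ X, 0 < h x) :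
    ∀ x ∈ X, ∀ y ∈ X,
      g y / h y - g x / h x ≥
        ⟪gradient (fun z => g z / h z) x, (h x / h y) • (y - x)⟫ := by
  intro x hx y hy
  have hhx := hhpos x hx
  have hhy := hhpos y hy
  have hgx := hgdiff x hx
  have hhx' := hhdiff x hx
  -- fderiv of quotient
  have hinv : HasFDerivAt (fun z => (h z)⁻¹)
      ((-ContinuousLinearMap.mulLeftRight ℝ ℝ (h x)⁻¹ (h x)⁻¹).comp (fderiv ℝ h x)) x :=
    (hasFDerivAt_inv' hhx.ne').comp x hhx'.hasFDerivAt
  have hq : HasFDerivAt (fun z => g z / h z)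
      ((h x)⁻¹ • fderiv ℝ g x - (g x / h x ^ 2) • fderiv ℝ h x) x := by
    have hm := hgx.hasFDerivAt.mul hinv
    have hfun : (fun z => g z / h z) = fun z => g z * (h z)⁻¹ := by
      funext z; rw [div_eq_mul_inv]
    rw [hfun]
    refine hm.congr_fderiv ?_
    ext v
    simp only [ContinuousLinearMap.sub_apply, ContinuousLinearMap.smul_apply,
      ContinuousLinearMap.add_apply, ContinuousLinearMap.comp_apply,
      ContinuousLinearMap.neg_apply, ContinuousLinearMap.mulLeftRight_apply, smul_eq_mul]
    ring
  have hfd : fderiv ℝ (fun z => g z / h z) x =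
      (h x)⁻¹ • fderiv ℝ g x - (g x / h x ^ 2) • fderiv ℝ h x := hq.fderiv
  rw [inner_gradient_eq, hfd]
  set v := y - x
  have hg1 : g x + fderiv ℝ g x v ≤ g y := convexOn_first_order hgconv hx hy hgx
  have hh1 : h y ≤ h x + fderiv ℝ h x v := by
    have hthis := convexOn_first_order hhconc.neg hx hy hhx'.neg
    have hneg : fderiv ℝ (-h) x = -fderiv ℝ h x := by
      have e : (-h) = fun z => -h z := rfl
      rw [e, fderiv_fun_neg]
    rw [hneg] at hthis
    simp only [Pi.neg_apply, ContinuousLinearMap.neg_apply] at hthis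
    linarith
  simp only [map_smul, ContinuousLinearMap.sub_apply, ContinuousLinearMap.smul_apply,
    smul_eq_mul]
  have hc : g x / h x * h x = g x := div_mul_cancel₀ _ hhx.ne'
  have hgx0 : 0 ≤ g x / h x := div_nonneg (hgnonneg x hx) hhx.le
  have key : g y - g x / h x * h y ≥
      (h x) * ((h x)⁻¹ * fderiv ℝ g x v - g x / h x ^ 2 * fderiv ℝ h x v) := by
    have e1 : (h x) * ((h x)⁻¹ * fderiv ℝ g x v - g x / h x ^ 2 * fderiv ℝ h x v)
        = fderiv ℝ g x v - g x / h x * fderiv ℝ h x v := by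
      field_simp
    rw [e1]
    linarith [mul_le_mul_of_nonneg_left hh1 hgx0]
  have hdivy : (g y - g x / h x * h y) / h y = g y / h y - g x / h x := by
    field_simp
  calc h x / h y * ((h x)⁻¹ * fderiv ℝ g x v - g x / h x ^ 2 * fderiv ℝ h x v)
      = (h x * ((h x)⁻¹ * fderiv ℝ g x v - g x / h x ^ 2 * fderiv ℝ h x v)) / h y := by ring
    _ ≤ (g y - g x / h x * h y) / h y := by gcongr
    _ = g y / h y - g x / h x := hdivy
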